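/- Let σ₁ = diag(−1,1,−1) and σ₂ = [[−1/2, α, 0],[−3/(4α), −1/2, 0],[0,0,1]] with α ≠ 0, viewed as automorphisms of 𝔥₃. Then σ₁² = Id, σ₂³ = Id, and σ₁σ₂σ₁ = σ₂²; hence the subgroup of Aut(𝔥₃) generated by σ₁ and σ₂ is isomorphic to the symmetric group S₃. -/

import Mathlib

/-- The Lie bracket of the 3-dimensional Heisenberg Lie algebra `𝔥₃` in the
basis `X₁, X₂, X₃` with `[X₁,X₂] = X₃` and `X₃` central, written in coordinates. -/
def heisBracket (x y : Fin 3 → ℝ) : Fin 3 → ℝ :=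
  ![0, 0, x 0 * y 1 - x 1 * y 0]

/-- A matrix `M` (in the basis `X₁,X₂,X₃`) is a Lie algebra automorphism of `𝔥₃`
iff it is invertible and preserves the bracket. -/
def IsHeisAut (M : Matrix (Fin 3) (Fin 3) ℝ) : Prop :=
  M.det ≠ 0 ∧ ∀ x y : Fin 3 → ℝ,
    M.mulVec (heisBracket x y) = heisBracket (M.mulVec x) (M.mulVec y)

/-- The universal property of the dihedral group `D₃`: any pair of elements `a`, `b`
of a group with `a² = 1`, `b³ = 1`, `aba = b²` yields a homomorphism from `D₃`. -/
def d3Hom {G : Type*} [Group G] (a b : G) (ha : a ^ 2 = 1) (hb : b ^ 3 = 1)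
    (hab : a * b * a = b ^ 2) : DihedralGroup 3 →* G where
  toFun g := match g with
    | .r i => b ^ i.val
    | .sr i => a * b ^ i.val
  map_one' := by show b ^ (0 : ZMod 3).val = 1; simp
  map_mul' := by
    have hcomm : ∀ n : ℕ, b ^ n * a = a * b ^ (2 * n) := by
      intro n
      induction n with
      | zero => simp
      | succ k ih =>
        have hba : b * a = a * b ^ 2 := by
          rw [← hab, ← mul_assoc, ← mul_assoc, ← pow_two, ha, one_mul]
        calc b ^ (k+1) * a = b ^ k * (b * a) := by rw [pow_succ, mul_assoc]
          _ = b ^ k * a * b ^ 2 := by rw [hba, mul_assoc]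
          _ = a * b ^ (2*k) * b ^ 2 := by rw [ih]
          _ = a * b ^ (2*(k+1)) := by rw [mul_assoc, ← pow_add]; ring_nf
    have hmod : ∀ m : ℕ, b ^ m = b ^ (m % 3) := fun m => pow_eq_pow_mod m hb
    rintro (i | i) (j | j)
    · show b ^ (i + j).val = b ^ i.val * b ^ j.val
      rw [← pow_add, ZMod.val_add, ← hmod]
    · show a * b ^ (j - i).val = b ^ i.val * (a * b ^ j.val)
      rw [← mul_assoc, hcomm, mul_assoc, ← pow_add, hmod (2 * i.val + j.val)]
      congr 2
      revert i j; decide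
    · show a * b ^ (i + j).val = a * b ^ i.val * b ^ j.val
      rw [mul_assoc, ← pow_add, ZMod.val_add, ← hmod]
    · show b ^ (j - i).val = a * b ^ i.val * (a * b ^ j.val)
      rw [mul_assoc a _ _, ← mul_assoc (b ^ i.val) a _, hcomm, ← mul_assoc, ← mul_assoc,
        ← pow_two, ha, one_mul, ← pow_add, hmod (2 * i.val + j.val)]
      congr 1
      revert i j; decide

lemma hs3 : (Equiv.swap (0 : Fin 3) 1) ^ 2 = 1 := by decide
lemma hc3 : (finRotate 3) ^ 3 = 1 := by decide
lemma hsc3 : Equiv.swap (0 : Fin 3) 1 * finRotate 3 * Equiv.swap (0 : Fin 3) 1 =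
    (finRotate 3) ^ 2 := by decide

/-- `D₃` is isomorphic to `S₃`. -/
noncomputable def permEquiv : DihedralGroup 3 ≃* Equiv.Perm (Fin 3) := by
  have hbij : Function.Bijective (d3Hom _ _ hs3 hc3 hsc3) := by
    rw [Fintype.bijective_iff_injective_and_card]
    constructor
    · intro x y hxy
      rcases x with i | i <;> rcases y with j | j <;>
        revert hxy <;> fin_cases i <;> fin_cases j <;> decide
    · rw [DihedralGroup.card, Fintype.card_perm]; rfl
  exact MulEquiv.ofBijective _ hbij

lemma d3_closure : Subgroup.closure ({DihedralGroup.sr 0, DihedralGroup.r 1} :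
    Set (DihedralGroup 3)) = ⊤ := by
  rw [eq_top_iff]
  intro x _
  have h1 : DihedralGroup.sr (0 : ZMod 3) ∈ Subgroup.closure
      ({DihedralGroup.sr 0, DihedralGroup.r 1} : Set (DihedralGroup 3)) :=
    Subgroup.subset_closure (Or.inl rfl)
  have h2 : DihedralGroup.r (1 : ZMod 3) ∈ Subgroup.closure
      ({DihedralGroup.sr 0, DihedralGroup.r 1} : Set (DihedralGroup 3)) :=
    Subgroup.subset_closure (Or.inr rfl)
  rcases x with i | i <;> fin_cases i
  · exact Subgroup.one_mem _
  · exact h2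
  · show DihedralGroup.r (2 : ZMod 3) ∈ _
    have : DihedralGroup.r (2 : ZMod 3) = DihedralGroup.r 1 * DihedralGroup.r 1 := by decide
    rw [this]; exact mul_mem h2 h2
  · exact h1
  · show DihedralGroup.sr (1 : ZMod 3) ∈ _
    have : DihedralGroup.sr (1 : ZMod 3) = DihedralGroup.sr 0 * DihedralGroup.r 1 := by decide
    rw [this]; exact mul_mem h1 h2
  · show DihedralGroup.sr (2 : ZMod 3) ∈ _
    have : DihedralGroup.sr (2 : ZMod 3) = DihedralGroup.sr 0 * DihedralGroup.r 1 *
      DihedralGroup.r 1 := by decide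
    rw [this]; exact mul_mem (mul_mem h1 h2) h2

set_option maxHeartbeats 1600000 in
/-- For `σ₁ = diag(-1,1,-1)` and `σ₂ = [[-1/2,α,0],[-3/(4α),-1/2,0],[0,0,1]]`
(`α ≠ 0`), viewed as automorphisms of `𝔥₃`: `σ₁² = Id`, `σ₂³ = Id`,
`σ₁σ₂σ₁ = σ₂²`, and the subgroup of `Aut(𝔥₃)` they generate is isomorphic to
the symmetric group `S₃`. -/
theorem sigma_generate_S3 (α : ℝ) (hα : α ≠ 0)
    (u v : (Matrix (Fin 3) (Fin 3) ℝ)ˣ)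
    (hu : (u : Matrix (Fin 3) (Fin 3) ℝ) = !![-1, 0, 0; 0, 1, 0; 0, 0, -1])
    (hv : (v : Matrix (Fin 3) (Fin 3) ℝ) =
      !![-1 / 2, α, 0; -3 / (4 * α), -1 / 2, 0; 0, 0, 1]) :
    u ^ 2 = 1 ∧ v ^ 3 = 1 ∧ u * v * u = v ^ 2 ∧
    Nonempty (Subgroup.closure {u, v} ≃* Equiv.Perm (Fin 3)) := by
  have hu2 : u ^ 2 = 1 := by
    apply Units.ext
    rw [Units.val_pow_eq_pow_val, Units.val_one, hu]
    rw [← Matrix.ext_iff]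
    intro i j
    fin_cases i <;> fin_cases j <;>
      (simp [pow_succ, Matrix.mul_apply, Fin.sum_univ_three, Matrix.one_apply,
        Matrix.vecHead, Matrix.vecTail]
       try field_simp
       try ring)
  have hv3 : v ^ 3 = 1 := by
    apply Units.ext
    rw [Units.val_pow_eq_pow_val, Units.val_one, hv]
    rw [← Matrix.ext_iff]
    intro i j
    fin_cases i <;> fin_cases j <;>
      (simp [pow_succ, Matrix.mul_apply, Fin.sum_univ_three, Matrix.one_apply,
        Matrix.vecHead, Matrix.vecTail]
       try field_simp
       try ring)
  have huvu : u * v * u = v ^ 2 := by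
    apply Units.ext
    rw [Units.val_pow_eq_pow_val, Units.val_mul, Units.val_mul, hu, hv]
    rw [← Matrix.ext_iff]
    intro i j
    fin_cases i <;> fin_cases j <;>
      (simp [pow_succ, Matrix.mul_apply, Fin.sum_univ_three, Matrix.one_apply,
        Matrix.vecHead, Matrix.vecTail]
       try field_simp
       try ring)
  refine ⟨hu2, hv3, huvu, ?_⟩
  set ψ := d3Hom u v hu2 hv3 huvu with hψ
  -- `ψ` is injective
  have hv1 : v ≠ 1 := by
    intro h
    have := congrArg (fun w : (Matrix (Fin 3) (Fin 3) ℝ)ˣ =>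
      (w : Matrix (Fin 3) (Fin 3) ℝ) 0 1) h
    simp [hv, Matrix.one_apply] at this
    exact hα this
  have hv2 : v ^ 2 ≠ 1 := by
    intro h
    have := congrArg (fun w : (Matrix (Fin 3) (Fin 3) ℝ)ˣ =>
      (w : Matrix (Fin 3) (Fin 3) ℝ) 0 1) h
    simp [Units.val_pow_eq_pow_val, hv, pow_two, Matrix.mul_apply, Fin.sum_univ_three,
      Matrix.one_apply, Matrix.vecHead, Matrix.vecTail] at this
    apply hα; linarith
  have hvk : ∀ m : ℕ, ((v : Matrix (Fin 3) (Fin 3) ℝ) ^ m) 2 2 = 1 ∧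
      ((v : Matrix (Fin 3) (Fin 3) ℝ) ^ m) 2 0 = 0 ∧
      ((v : Matrix (Fin 3) (Fin 3) ℝ) ^ m) 2 1 = 0 := by
    intro m
    induction m with
    | zero => simp [Matrix.one_apply]
    | succ n ih =>
      have e : ∀ j, ((v : Matrix (Fin 3) (Fin 3) ℝ) ^ (n+1)) 2 j =
          ((v : Matrix (Fin 3) (Fin 3) ℝ) ^ n) 2 0 * (v : Matrix (Fin 3) (Fin 3) ℝ) 0 j +
          ((v : Matrix (Fin 3) (Fin 3) ℝ) ^ n) 2 1 * (v : Matrix (Fin 3) (Fin 3) ℝ) 1 j +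
          ((v : Matrix (Fin 3) (Fin 3) ℝ) ^ n) 2 2 * (v : Matrix (Fin 3) (Fin 3) ℝ) 2 j := by
        intro j
        rw [pow_succ, Matrix.mul_apply, Fin.sum_univ_three]
      refine ⟨?_, ?_, ?_⟩ <;>
        (rw [e, ih.1, ih.2.1, ih.2.2, hv]; norm_num [Matrix.cons_val_two, Matrix.vecHead, Matrix.vecTail])
  have hsr : ∀ k : ℕ, u * v ^ k ≠ 1 := by
    intro k h
    have h22 : ((u * v ^ k : (Matrix (Fin 3) (Fin 3) ℝ)ˣ) :
        Matrix (Fin 3) (Fin 3) ℝ) 2 2 = (1 : Matrix (Fin 3) (Fin 3) ℝ) 2 2 := by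
      rw [h, Units.val_one]
    have huvk : ((u * v ^ k : (Matrix (Fin 3) (Fin 3) ℝ)ˣ) :
        Matrix (Fin 3) (Fin 3) ℝ) 2 2 = -1 := by
      rw [Units.val_mul, hu, Matrix.mul_apply, Fin.sum_univ_three,
        Units.val_pow_eq_pow_val, (hvk k).1]
      norm_num [Matrix.cons_val_two, Matrix.vecHead, Matrix.vecTail]
    rw [huvk, Matrix.one_apply_eq] at h22
    norm_num at h22
  have hinj : Function.Injective ψ := by
    rw [injective_iff_map_eq_one]
    rintro (i | i) h <;> fin_cases i
    · rfl
    · exact absurd (show v = 1 by rw [← pow_one v]; exact h) hv1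
    · exact absurd (show v ^ 2 = 1 from h) hv2
    · exact absurd (show u * v ^ 0 = 1 from h) (hsr 0)
    · exact absurd (show u * v ^ 1 = 1 from h) (hsr 1)
    · exact absurd (show u * v ^ 2 = 1 from h) (hsr 2)
  -- the range of `ψ` is the subgroup generated by `u` and `v`
  have e1 : ψ (DihedralGroup.sr 0) = u := by
    show u * v ^ (0 : ZMod 3).val = u
    have h0 : (0 : ZMod 3).val = 0 := rfl
    rw [h0, pow_zero, mul_one]
  have e2 : ψ (DihedralGroup.r 1) = v := by
    show v ^ (1 : ZMod 3).val = v
    have h1 : (1 : ZMod 3).val = 1 := rfl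
    rw [h1, pow_one]
  have hrange : ψ.range = Subgroup.closure {u, v} := by
    rw [MonoidHom.range_eq_map, ← d3_closure, MonoidHom.map_closure, Set.image_pair, e1, e2]
  exact ⟨((MulEquiv.subgroupCongr hrange.symm).trans
    (MonoidHom.ofInjective hinj).symm).trans permEquiv⟩
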